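/- Let γ : [0,1] → ℝ² be a continuous injective curve that is positive (i.e., λ₂(γ([s,t])) > 0 whenever 0 ≤ s < t ≤ 1) and satisfies λ₂(γ([0,1])) = β with β > 0. Then there exists an increasing homeomorphism h : [0,1] → [0,1] such that the curve γ₁ = γ ∘ h is homogeneously parametrized with factor β, i.e., λ₂(γ₁(E)) = β · λ₁(E) for every Lebesgue-measurable set E ⊆ [0,1]. -/

import Mathlib

open MeasureTheory Set

/-- Any positive area-filling curve admits a reparametrization by an increasing
homeomorphism of `[0,1]` which is homogeneously parametrized with factor `β`. -/
theorem positive_curve_homogeneous_reparametrization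
    (γ : ℝ → ℝ × ℝ) (β : ℝ) (hβ : 0 < β)
    (hcont : ContinuousOn γ (Icc 0 1)) (hinj : InjOn γ (Icc 0 1))
    (hpos : ∀ s t : ℝ, 0 ≤ s → s < t → t ≤ 1 → 0 < volume (γ '' Icc s t))
    (harea : volume (γ '' Icc 0 1) = ENNReal.ofReal β) :
    ∃ h : ℝ → ℝ,
      StrictMonoOn h (Icc 0 1) ∧
      ContinuousOn h (Icc 0 1) ∧
      h '' Icc 0 1 = Icc 0 1 ∧
      ∀ E : Set ℝ, E ⊆ Icc 0 1 → NullMeasurableSet E volume →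
        volume ((γ ∘ h) '' E) = ENNReal.ofReal β * volume E := by
  classical
  -- the restricted curve is a measurable embedding
  have hemb : MeasurableEmbedding ((Icc (0:ℝ) 1).restrict γ) :=
    ContinuousOn.measurableEmbedding measurableSet_Icc hcont hinj
  -- singletons in the plane are null
  have plane_sing : ∀ p : ℝ × ℝ, volume ({p} : Set (ℝ × ℝ)) = 0 := by
    intro p
    have : ({p} : Set (ℝ × ℝ)) = {p.1} ×ˢ {p.2} := by
      ext q; simp [Prod.ext_iff]
    rw [this, Measure.volume_eq_prod ℝ ℝ, Measure.prod_prod]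
    simp
  -- the "area" measure on [0,1]
  set ν : Measure ℝ :=
    Measure.map (Subtype.val) (Measure.comap ((Icc (0:ℝ) 1).restrict γ) volume) with hν
  have ν_apply : ∀ A : Set ℝ, MeasurableSet A → ν A = volume (γ '' (A ∩ Icc 0 1)) := by
    intro A hA
    rw [hν, Measure.map_apply measurable_subtype_coe hA, hemb.comap_apply]
    congr 1
    ext p
    constructor
    · rintro ⟨⟨x, hx⟩, hxA, rfl⟩
      exact ⟨x, ⟨hxA, hx⟩, rfl⟩
    · rintro ⟨x, ⟨hxA, hx⟩, rfl⟩
      exact ⟨⟨x, hx⟩, hxA, rfl⟩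
  have ν_univ : ν univ = ENNReal.ofReal β := by
    rw [ν_apply _ MeasurableSet.univ, univ_inter, harea]
  haveI : IsFiniteMeasure ν := ⟨by rw [ν_univ]; exact ENNReal.ofReal_lt_top⟩
  have ν_fin : ∀ A : Set ℝ, ν A ≠ ⊤ := fun A => measure_ne_top ν A
  -- singletons are null
  have ν_sing : ∀ x : ℝ, ν {x} = 0 := by
    intro x
    rw [ν_apply _ (measurableSet_singleton x)]
    refine le_antisymm ?_ zero_le
    calc volume (γ '' ({x} ∩ Icc 0 1)) ≤ volume (γ '' {x}) :=
          measure_mono (image_mono inter_subset_left)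
      _ = volume {γ x} := by rw [image_singleton]
      _ = 0 := plane_sing _
  -- the cumulative area function
  set F : ℝ → ℝ := fun t => (ν (Iic t)).toReal with hF
  have νIic : ∀ t, ν (Iic t) = ENNReal.ofReal (F t) := fun t =>
    (ENNReal.ofReal_toReal (ν_fin _)).symm
  have F_mono : Monotone F := fun s t hst =>
    ENNReal.toReal_mono (ν_fin _) (measure_mono (Iic_subset_Iic.2 hst))
  have ν_split : ∀ s t : ℝ, s ≤ t → ν (Iic t) = ν (Iic s) + ν (Ioc s t) := by
    intro s t hst
    rw [← Iic_union_Ioc_eq_Iic hst, measure_union (Iic_disjoint_Ioc le_rfl) measurableSet_Ioc]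
  have F_sub : ∀ s t : ℝ, s ≤ t → F t - F s = (ν (Ioc s t)).toReal := by
    intro s t hst
    rw [hF]
    simp only
    rw [ν_split s t hst, ENNReal.toReal_add (ν_fin _) (ν_fin _)]
    ring
  have F_nonneg : ∀ t, 0 ≤ F t := fun t => ENNReal.toReal_nonneg
  have F_le : ∀ t, F t ≤ β := by
    intro t
    have h1 : ν (Iic t) ≤ ν univ := measure_mono (subset_univ _)
    rw [ν_univ] at h1
    calc F t ≤ (ENNReal.ofReal β).toReal := ENNReal.toReal_mono ENNReal.ofReal_ne_top h1
      _ = β := ENNReal.toReal_ofReal hβ.le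
  have F0 : F 0 = 0 := by
    have hset : Iic (0:ℝ) ∩ Icc 0 1 = {0} := by
      ext x
      simp only [mem_inter_iff, mem_Iic, mem_Icc, mem_singleton_iff]
      constructor
      · rintro ⟨h1, h2, _⟩; linarith
      · rintro rfl; norm_num
    rw [hF]
    simp only
    rw [ν_apply _ measurableSet_Iic, hset, image_singleton, plane_sing]
    simp
  have F1 : F 1 = β := by
    have hset : Iic (1:ℝ) ∩ Icc 0 1 = Icc 0 1 := by
      ext x; simp only [mem_inter_iff, mem_Iic, mem_Icc]; tauto
    rw [hF]
    simp only
    rw [ν_apply _ measurableSet_Iic, hset, harea, ENNReal.toReal_ofReal hβ.le]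
  have F_le0 : ∀ t, t ≤ 0 → F t = 0 := fun t ht =>
    le_antisymm (F0 ▸ F_mono ht) (F_nonneg t)
  have F_ge1 : ∀ t, 1 ≤ t → F t = β := fun t ht =>
    le_antisymm (F_le t) (F1 ▸ F_mono ht)
  -- strict monotonicity on [0,1]
  have F_strict : StrictMonoOn F (Icc 0 1) := by
    intro s hs t ht hst
    have hpos' : 0 < ν (Ioc s t) := by
      have hIoc : Ioc s t ∩ Icc 0 1 = Ioc s t := by
        rw [inter_eq_left]
        intro x hx
        exact ⟨le_trans hs.1 hx.1.le, le_trans hx.2 ht.2⟩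
      rw [ν_apply _ measurableSet_Ioc, hIoc]
      have hsplit : γ '' Icc s t ⊆ γ '' Ioc s t ∪ {γ s} := by
        rintro p ⟨x, hx, rfl⟩
        rcases eq_or_lt_of_le hx.1 with rfl | hlt
        · exact Or.inr rfl
        · exact Or.inl ⟨x, ⟨hlt, hx.2⟩, rfl⟩
      have h1 := hpos s t hs.1 hst ht.2
      have h2 : volume (γ '' Icc s t) ≤ volume (γ '' Ioc s t) + volume {γ s} :=
        le_trans (measure_mono hsplit) (measure_union_le _ _)
      rw [plane_sing, add_zero] at h2
      exact lt_of_lt_of_le h1 h2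
    have hlt : F s < F t := by
      have := F_sub s t hst.le
      have h2 : 0 < (ν (Ioc s t)).toReal := ENNReal.toReal_pos hpos'.ne' (ν_fin _)
      linarith
    exact hlt
  -- continuity of F
  have F_cont : Continuous F := by
    rw [Metric.continuous_iff]
    intro x ε hε
    set s : ℕ → Set ℝ := fun n => Ioc (x - 1/(n+1)) (x + 1/(n+1)) with hs
    have hmeas : ∀ n, NullMeasurableSet (s n) ν := fun n =>
      measurableSet_Ioc.nullMeasurableSet
    have hanti : Antitone s := by
      intro m n hmn
      have h1 : (1:ℝ)/(n+1) ≤ 1/(m+1) := by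
        apply one_div_le_one_div_of_le (by positivity)
        exact_mod_cast Nat.succ_le_succ hmn
      exact Ioc_subset_Ioc (by linarith) (by linarith)
    have hint : ⋂ n, s n = {x} := by
      ext t
      simp only [mem_iInter, hs, mem_Ioc, mem_singleton_iff]
      constructor
      · intro ht
        have hle : t ≤ x := by
          by_contra hlt
          push_neg at hlt
          obtain ⟨n, hn⟩ := exists_nat_one_div_lt (sub_pos.2 hlt)
          have h2 : t ≤ x + 1/(n+1) := (ht n).2
          linarith
        have hge : x ≤ t := by
          by_contra hlt
          push_neg at hlt
          obtain ⟨n, hn⟩ := exists_nat_one_div_lt (sub_pos.2 hlt)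
          have h1 : x - 1/(n+1) < t := (ht n).1
          linarith
        linarith
      · rintro rfl n
        have hpos'' : (0:ℝ) < 1/(n+1) := by positivity
        constructor <;> linarith
    have htend := tendsto_measure_iInter_atTop hmeas hanti ⟨0, ν_fin _⟩
    rw [hint, ν_sing] at htend
    have hev : ∀ᶠ n in Filter.atTop, ν (s n) < ENNReal.ofReal ε :=
      htend.eventually (gt_mem_nhds (ENNReal.ofReal_pos.2 hε))
    obtain ⟨n, hn⟩ := hev.exists
    have hδpos : (0:ℝ) < 1/(n+1) := by positivity
    refine ⟨1/(n+1), hδpos, fun y hy => ?_⟩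
    rw [Real.dist_eq] at hy ⊢
    rw [abs_sub_lt_iff] at hy
    have hkey : ∀ a b : ℝ, a ≤ b → Ioc a b ⊆ s n → |F b - F a| < ε := by
      intro a b hab hsub
      rw [abs_of_nonneg (by linarith [F_mono hab]), F_sub a b hab]
      exact ENNReal.toReal_lt_of_lt_ofReal (lt_of_le_of_lt (measure_mono hsub) hn)
    rcases le_total x y with hxy | hyx
    · exact hkey x y hxy (Ioc_subset_Ioc (by linarith) (by linarith [hy.1]))
    · rw [abs_sub_comm]
      exact hkey y x hyx (Ioc_subset_Ioc (by linarith [hy.2]) (by linarith))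
  -- the normalized function φ
  set φ : ℝ → ℝ := fun t => F t / β with hφ
  have φ_cont : Continuous φ := F_cont.div_const β
  have φ_mono : Monotone φ := fun s t hst =>
    (div_le_div_iff_of_pos_right hβ).2 (F_mono hst)
  have φ_strict : StrictMonoOn φ (Icc 0 1) := fun s hs t ht hst =>
    (div_lt_div_iff_of_pos_right hβ).2 (F_strict hs ht hst)
  have φ0 : φ 0 = 0 := by rw [hφ]; simp only; rw [F0]; simp
  have φ1 : φ 1 = 1 := by rw [hφ]; simp only; rw [F1]; field_simp
  have φ_nonneg : ∀ t, 0 ≤ φ t := fun t => div_nonneg (F_nonneg t) hβ.le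
  have φ_le1 : ∀ t, φ t ≤ 1 := fun t => by
    rw [hφ]; simp only
    rw [div_le_one hβ]; exact F_le t
  have φ_ge1 : ∀ t, 1 ≤ t → φ t = 1 := fun t ht => by
    rw [hφ]; simp only; rw [F_ge1 t ht]; field_simp
  have Fφ : ∀ t, F t = β * φ t := fun t => by
    rw [hφ]; field_simp
  -- surjectivity of φ onto [0,1]
  have φ_mapsto : MapsTo φ (Icc 0 1) (Icc 0 1) := fun t _ => ⟨φ_nonneg t, φ_le1 t⟩
  have φ_surj : SurjOn φ (Icc 0 1) (Icc 0 1) := by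
    have := intermediate_value_Icc (zero_le_one (α := ℝ)) (φ_cont.continuousOn)
    rw [φ0, φ1] at this
    exact this
  -- the inverse function h
  set h : ℝ → ℝ := Function.invFunOn φ (Icc 0 1) with hh
  have h_mem : ∀ y ∈ Icc (0:ℝ) 1, h y ∈ Icc (0:ℝ) 1 := fun y hy =>
    Function.invFunOn_mem (φ_surj hy)
  have h_right : ∀ y ∈ Icc (0:ℝ) 1, φ (h y) = y := fun y hy =>
    Function.invFunOn_eq (φ_surj hy)
  have h_left : ∀ t ∈ Icc (0:ℝ) 1, h (φ t) = t := fun t ht =>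
    φ_strict.injOn.leftInvOn_invFunOn ht
  have h_strict : StrictMonoOn h (Icc 0 1) := by
    intro y₁ h₁ y₂ h₂ hlt
    by_contra hcon
    push_neg at hcon
    have := φ_mono hcon
    rw [h_right y₁ h₁, h_right y₂ h₂] at this
    exact absurd this (not_le.2 hlt)
  have h_img : h '' Icc 0 1 = Icc 0 1 := by
    apply Subset.antisymm
    · rintro _ ⟨y, hy, rfl⟩
      exact h_mem y hy
    · intro t ht
      exact ⟨φ t, φ_mapsto ht, h_left t ht⟩
  -- continuity of h
  have h_contOn : ContinuousOn h (Icc 0 1) := by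
    haveI : CompactSpace (Icc (0:ℝ) 1) := isCompact_iff_compactSpace.mp isCompact_Icc
    set e : Icc (0:ℝ) 1 ≃ Icc (0:ℝ) 1 :=
      { toFun := fun x => ⟨φ x, φ_mapsto x.2⟩
        invFun := fun y => ⟨h y, h_mem y y.2⟩
        left_inv := fun x => Subtype.ext (h_left x x.2)
        right_inv := fun y => Subtype.ext (h_right y y.2) } with he
    have e_cont : Continuous e := by
      apply Continuous.subtype_mk
      exact φ_cont.comp continuous_subtype_val
    have hcont2 : Continuous ⇑(e_cont.homeoOfEquivCompactToT2.symm) :=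
      Homeomorph.continuous _
    have hcoe : ⇑(e_cont.homeoOfEquivCompactToT2.symm) = ⇑e.symm := by
      rfl
    rw [hcoe] at hcont2
    have hsymm : Continuous (fun y : Icc (0:ℝ) 1 => h (y : ℝ)) := by
      have heq : (fun y : Icc (0:ℝ) 1 => h (y : ℝ)) =
          fun y => ((e.symm y : Icc (0:ℝ) 1) : ℝ) := rfl
      rw [heq]
      exact continuous_subtype_val.comp hcont2
    rw [continuousOn_iff_continuous_restrict]
    exact hsymm
  -- the pushforward identity
  have φ_meas : Measurable φ := φ_cont.measurable
  haveI : IsFiniteMeasure (Measure.map φ ν) := Measure.isFiniteMeasure_map ν φ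
  have hmap : Measure.map φ ν = (ENNReal.ofReal β) • (volume.restrict (Icc 0 1)) := by
    apply Measure.ext_of_Iic
    intro c
    rw [Measure.map_apply φ_meas measurableSet_Iic]
    rw [Measure.smul_apply, Measure.restrict_apply measurableSet_Iic, smul_eq_mul]
    rcases lt_or_ge c 0 with hc | hc
    · have h1 : φ ⁻¹' Iic c = ∅ := by
        ext t
        simp only [mem_preimage, mem_Iic, mem_empty_iff_false, iff_false, not_le]
        exact lt_of_lt_of_le hc (φ_nonneg t)
      have h2 : Iic c ∩ Icc (0:ℝ) 1 = ∅ := by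
        ext x
        simp only [mem_inter_iff, mem_Iic, mem_Icc, mem_empty_iff_false, iff_false]
        rintro ⟨h1', h2', _⟩; linarith
      rw [h1, h2]
      simp
    rcases lt_or_ge c 1 with hc1 | hc1
    · obtain ⟨a, ha, haφ⟩ := φ_surj ⟨hc, hc1.le⟩
      have hT : φ ⁻¹' Iic c = Iic a := by
        ext t
        simp only [mem_preimage, mem_Iic]
        constructor
        · intro htc
          by_contra hta
          push_neg at hta
          rcases le_or_gt t 1 with ht1 | ht1
          · have : φ a < φ t :=
              φ_strict ha ⟨le_trans ha.1 hta.le, ht1⟩ hta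
            rw [haφ] at this
            linarith
          · rw [φ_ge1 t ht1.le] at htc
            linarith
        · intro hta
          calc φ t ≤ φ a := φ_mono hta
            _ = c := haφ
      have h2 : Iic c ∩ Icc (0:ℝ) 1 = Icc 0 c := by
        ext x
        simp only [mem_inter_iff, mem_Iic, mem_Icc]
        constructor
        · rintro ⟨h1', h2', _⟩; exact ⟨h2', h1'⟩
        · rintro ⟨h1', h2'⟩; exact ⟨h2', h1', by linarith⟩
      rw [hT, h2, νIic a, Fφ a, haφ, Real.volume_Icc, sub_zero,
        ← ENNReal.ofReal_mul hβ.le]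
    · have hT : φ ⁻¹' Iic c = univ := by
        ext t
        simp only [mem_preimage, mem_Iic, mem_univ, iff_true]
        exact le_trans (φ_le1 t) hc1
      have h2 : Iic c ∩ Icc (0:ℝ) 1 = Icc 0 1 := by
        rw [inter_eq_right]
        intro x hx
        exact le_trans hx.2 hc1
      rw [hT, h2, ν_univ, Real.volume_Icc, sub_zero, ENNReal.ofReal_one, mul_one]
  -- key identity for measurable sets
  have hkey : ∀ A : Set ℝ, MeasurableSet A → A ⊆ Icc 0 1 →
      volume (γ '' (h '' A)) = ENNReal.ofReal β * volume A := by
    intro A hA hAsub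
    have himgA : h '' A = φ ⁻¹' A ∩ Icc 0 1 := by
      apply Subset.antisymm
      · rintro _ ⟨y, hy, rfl⟩
        exact ⟨by rw [mem_preimage, h_right y (hAsub hy)]; exact hy, h_mem y (hAsub hy)⟩
      · rintro t ⟨htA, htI⟩
        exact ⟨φ t, htA, h_left t htI⟩
    have hmeasA : MeasurableSet (φ ⁻¹' A ∩ Icc 0 1) :=
      (φ_meas hA).inter measurableSet_Icc
    have step1 : volume (γ '' (h '' A)) = ν (φ ⁻¹' A ∩ Icc 0 1) := by
      rw [himgA, ν_apply _ hmeasA, inter_assoc, inter_self]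
    have step2 : ν (φ ⁻¹' A ∩ Icc 0 1) = ν (φ ⁻¹' A) := by
      apply le_antisymm (measure_mono inter_subset_left)
      have hcompl : ν (Icc (0:ℝ) 1)ᶜ = 0 := by
        rw [ν_apply _ measurableSet_Icc.compl, compl_inter_self, image_empty]
        simp
      calc ν (φ ⁻¹' A) ≤ ν (φ ⁻¹' A ∩ Icc 0 1 ∪ (Icc (0:ℝ) 1)ᶜ) := by
            apply measure_mono
            intro t ht
            by_cases htI : t ∈ Icc (0:ℝ) 1
            · exact Or.inl ⟨ht, htI⟩
            · exact Or.inr htI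
        _ ≤ ν (φ ⁻¹' A ∩ Icc 0 1) + ν (Icc (0:ℝ) 1)ᶜ := measure_union_le _ _
        _ = ν (φ ⁻¹' A ∩ Icc 0 1) := by rw [hcompl, add_zero]
    have step3 : ν (φ ⁻¹' A) = ENNReal.ofReal β * volume A := by
      have := Measure.map_apply φ_meas hA (μ := ν)
      rw [hmap] at this
      rw [← this, Measure.smul_apply, Measure.restrict_apply hA, smul_eq_mul,
        inter_eq_self_of_subset_left hAsub]
    rw [step1, step2, step3]
  -- conclusion
  refine ⟨h, h_strict, h_contOn, h_img, ?_⟩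
  intro E hEsub hE
  obtain ⟨B, hBsub, hBmeas, hBE⟩ := hE.exists_measurable_subset_ae_eq
  have hEB : volume (E \ B) = 0 := (ae_eq_set.mp hBE).2
  set N : Set ℝ := toMeasurable volume (E \ B) ∩ Icc 0 1 with hN
  have hNmeas : MeasurableSet N := (measurableSet_toMeasurable _ _).inter measurableSet_Icc
  have hNnull : volume N = 0 := by
    apply le_antisymm _ zero_le
    calc volume N ≤ volume (toMeasurable volume (E \ B)) := measure_mono inter_subset_left
      _ = volume (E \ B) := measure_toMeasurable _
      _ = 0 := hEB
  have hNsub : E \ B ⊆ N := subset_inter (subset_toMeasurable _ _)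
    (fun x hx => hEsub hx.1)
  have hBsub' : B ⊆ Icc 0 1 := hBsub.trans hEsub
  have hvolEB : volume E = volume B := (measure_congr hBE).symm
  have himage : (γ ∘ h) '' E = γ '' (h '' E) := image_comp γ h E
  rw [himage]
  apply le_antisymm
  · calc volume (γ '' (h '' E)) ≤ volume (γ '' (h '' B) ∪ γ '' (h '' N)) := by
          apply measure_mono
          rw [← image_union, ← image_union]
          apply image_mono
          apply image_mono
          intro x hx
          by_cases hxB : x ∈ B
          · exact Or.inl hxB
          · exact Or.inr (hNsub ⟨hx, hxB⟩)
      _ ≤ volume (γ '' (h '' B)) + volume (γ '' (h '' N)) := measure_union_le _ _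
      _ = ENNReal.ofReal β * volume B + ENNReal.ofReal β * volume N := by
          rw [hkey B hBmeas hBsub', hkey N hNmeas inter_subset_right]
      _ = ENNReal.ofReal β * volume E := by rw [hNnull, mul_zero, add_zero, hvolEB]
  · calc ENNReal.ofReal β * volume E = volume (γ '' (h '' B)) := by
          rw [hkey B hBmeas hBsub', hvolEB]
      _ ≤ volume (γ '' (h '' E)) :=
          measure_mono (image_mono (image_mono hBsub))
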